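/- Let Ψ^1,...,Ψ^n be matrices with Ψ^j ∈ ℂ^{D×N_j}, and suppose ‖Ψ^j‖_F ≤ c · ‖(A^j)_d − A^j‖_F for each j, where c ≥ 0 and A^j ∈ ℂ^{D×N_j}. Let A = [A^1|...|A^n] and Ψ̃ = [Ψ^1|...|Ψ^n]. Then ‖Ψ̃‖_F ≤ c · ‖(A)_d − A‖_F. -/

import Mathlib

open Matrix

/-- Frobenius norm of a complex matrix. -/
noncomputable def frob {m n : Type*} [Fintype m] [Fintype n] (M : Matrix m n ℂ) : ℝ :=
  Real.sqrt (∑ i, ∑ j, ‖M i j‖ ^ 2)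

/-- `B` is a best rank-`d` approximation of `A` in Frobenius norm. -/
def IsBestRankApprox {m n : Type*} [Fintype m] [Fintype n] (d : ℕ)
    (A B : Matrix m n ℂ) : Prop :=
  B.rank ≤ d ∧ ∀ C : Matrix m n ℂ, C.rank ≤ d → frob (B - A) ≤ frob (C - A)

/-- The singular values of `M` : nonnegative square roots of the eigenvalues of `M * Mᴴ`
(unsorted enumeration). -/
noncomputable def singVals {D : ℕ} {n : Type*} [Fintype n] (M : Matrix (Fin D) n ℂ) :
    Fin D → ℝ :=
  fun i => Real.sqrt ((Matrix.isHermitian_mul_conjTranspose_self M).eigenvalues i)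

/-- `C` is a scaled left-singular-vector form of `M`, i.e. `C = U Σ = M V` for some
SVD `M = U Σ Vᴴ` of `M`: equivalently `C = M V` with `V` unitary and `Cᴴ C` diagonal with
nonnegative real entries. -/
def IsScaledLeftSV {D : ℕ} {n : Type*} [Fintype n] [DecidableEq n]
    (M C : Matrix (Fin D) n ℂ) : Prop :=
  ∃ V ∈ Matrix.unitaryGroup n ℂ, C = M * V ∧
    ∃ t : n → ℝ, (∀ j, 0 ≤ t j) ∧ Cᴴ * C = Matrix.diagonal (fun j => (t j : ℂ))

section Aux
open Finset

lemma coord_norm_le {D : ℕ} (v : EuclideanSpace ℂ (Fin D)) (r : Fin D) :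
    ‖v r‖ ≤ ‖v‖ := by
  have h : ‖v r‖ ^ 2 ≤ ‖v‖ ^ 2 := by
    rw [EuclideanSpace.norm_eq, Real.sq_sqrt (by positivity)]
    exact Finset.single_le_sum (f := fun i => ‖v i‖ ^ 2) (fun _ _ => by positivity)
      (Finset.mem_univ r)
  nlinarith [norm_nonneg (v r), norm_nonneg v]

lemma col_norm_le_frob {D Nj : ℕ} (C : Matrix (Fin D) (Fin Nj) ℂ) (j : Fin Nj) :
    ‖((WithLp.equiv 2 (Fin D → ℂ)).symm (fun r => C r j) : EuclideanSpace ℂ (Fin D))‖ ≤ frob C := by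
  rw [EuclideanSpace.norm_eq, frob]
  apply Real.sqrt_le_sqrt
  refine Finset.sum_le_sum fun i _ => ?_
  exact Finset.single_le_sum (f := fun j' => ‖C i j'‖ ^ 2) (fun _ _ => by positivity)
      (Finset.mem_univ j)

lemma exists_factorization {D Nj : ℕ} (e : ℕ) (C : Matrix (Fin D) (Fin Nj) ℂ)
    (hrank : C.rank ≤ e) (R : ℝ) (hR : frob C ≤ R) :
    ∃ (X : Matrix (Fin D) (Fin e) ℂ) (Y : Matrix (Fin e) (Fin Nj) ℂ),
      (∀ r k, ‖X r k‖ ≤ 1) ∧ (∀ k j, ‖Y k j‖ ≤ R) ∧ C = X * Y := by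
  classical
  set E := EuclideanSpace ℂ (Fin D) with hE
  let eqv : (Fin D → ℂ) ≃ₗ[ℂ] E := (WithLp.linearEquiv 2 ℂ (Fin D → ℂ)).symm
  let cols : Fin Nj → E := fun j => eqv (Cᵀ j)
  let S : Submodule ℂ E := Submodule.span ℂ (Set.range cols)
  have hSr : Set.range cols = (eqv : (Fin D → ℂ) →ₗ[ℂ] E) '' (Set.range Cᵀ) := by
    ext x; simp [cols, Set.range_comp]
    exact ⟨fun ⟨y, hy⟩ => ⟨_, ⟨y, rfl⟩, hy⟩, fun ⟨_, ⟨y, rfl⟩, hy⟩ => ⟨y, hy⟩⟩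
  have hfr : Module.finrank ℂ S ≤ e := by
    have h2 : S = Submodule.map (eqv : (Fin D → ℂ) →ₗ[ℂ] E) (Submodule.span ℂ (Set.range Cᵀ)) := by
      rw [Submodule.map_span, ← hSr]
    have h3 : Module.finrank ℂ S = Module.finrank ℂ (Submodule.span ℂ (Set.range Cᵀ)) := by
      rw [h2]; exact LinearEquiv.finrank_map_eq eqv _
    rw [h3]; rw [C.rank_eq_finrank_span_cols] at hrank; exact hrank
  set fr := Module.finrank ℂ S with hfrdef
  let b := stdOrthonormalBasis ℂ S
  let x : Fin e → E := fun k => if h : (k : ℕ) < fr then ((b ⟨(k : ℕ), h⟩ : S) : E) else 0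
  have hxnorm : ∀ k, ‖x k‖ ≤ 1 := by
    intro k
    by_cases h : (k : ℕ) < fr
    · simp only [x, dif_pos h]
      rw [Submodule.norm_coe]
      exact le_of_eq (b.orthonormal.1 _)
    · simp [x, dif_neg h]
  have hcols : ∀ j, ∀ r, C r j = ∑ i : Fin fr, (inner ℂ ((b i : S) : E) (cols j) : ℂ) *
      (WithLp.linearEquiv 2 ℂ (Fin D → ℂ) ((b i : S) : E) r) := by
    intro j r
    have hmem : cols j ∈ S := Submodule.subset_span (Set.mem_range_self j)
    have h4 := congrArg (Submodule.subtype S) (b.sum_repr' (⟨cols j, hmem⟩ : S))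
    rw [map_sum] at h4
    simp only [Submodule.coe_subtype, Submodule.coe_smul] at h4
    have hexp : (cols j : E) = ∑ i : Fin fr, (inner ℂ ((b i : S) : E) (cols j) : ℂ) • ((b i : S) : E) := by
      refine h4.symm.trans (Finset.sum_congr rfl fun i _ => ?_)
      congr 1
    have h5 := congrArg (fun w => WithLp.linearEquiv 2 ℂ (Fin D → ℂ) w r) hexp
    simp only [map_sum, _root_.map_smul] at h5
    have h6 : WithLp.linearEquiv 2 ℂ (Fin D → ℂ) (cols j) r = C r j := rfl
    rw [h6] at h5
    rw [h5, Finset.sum_apply]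
    simp [Pi.smul_apply, smul_eq_mul]
  refine ⟨Matrix.of fun r k => WithLp.linearEquiv 2 ℂ (Fin D → ℂ) (x k) r,
          Matrix.of fun k j => (inner ℂ (x k) (cols j) : ℂ), ?_, ?_, ?_⟩
  · intro r k
    exact (coord_norm_le (x k) r).trans (hxnorm k)
  · intro k j
    calc ‖(inner ℂ (x k) (cols j) : ℂ)‖ ≤ ‖x k‖ * ‖cols j‖ := norm_inner_le_norm _ _
      _ ≤ 1 * frob C := by
          apply mul_le_mul (hxnorm k) (col_norm_le_frob C j) (norm_nonneg _) zero_le_one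
      _ ≤ R := by rw [one_mul]; exact hR
  · ext r j
    rw [Matrix.mul_apply]
    simp only [Matrix.of_apply]
    rw [hcols j r]
    set f : Fin e → ℂ := fun k =>
      WithLp.linearEquiv 2 ℂ (Fin D → ℂ) (x k) r * (inner ℂ (x k) (cols j) : ℂ) with hfdef
    have hvanish : ∀ k : Fin e, ¬ ((k : ℕ) < fr) → f k = 0 := by
      intro k hk
      have hx0 : x k = 0 := dif_neg hk
      simp [f, hx0]
    have step1 : ∑ k : Fin e, f k = ∑ k ∈ Finset.univ.filter (fun k : Fin e => (k : ℕ) < fr), f k := by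
      refine (Finset.sum_filter_of_ne ?_).symm
      intro k _ hne
      by_contra hlt
      exact hne (hvanish k hlt)
    have step2 : ∑ k ∈ Finset.univ.filter (fun k : Fin e => (k : ℕ) < fr), f k
        = ∑ i : Fin fr, f (Fin.castLE hfr i) := by
      refine Finset.sum_bij' (fun k hk => (⟨(k : ℕ), (Finset.mem_filter.mp hk).2⟩ : Fin fr))
        (fun i _ => Fin.castLE hfr i) ?_ ?_ ?_ ?_ ?_
      · intro k hk; exact Finset.mem_univ _
      · intro i _
        exact Finset.mem_filter.mpr ⟨Finset.mem_univ _, by simpa using i.isLt⟩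
      · intro k hk; exact Fin.ext rfl
      · intro i _; exact Fin.ext rfl
      · intro k hk; rfl
    rw [step1, step2]
    refine Finset.sum_congr rfl fun i _ => ?_
    have hx : x (Fin.castLE hfr i) = ((b i : S) : E) := by
      show (if h : ((Fin.castLE hfr i : Fin e) : ℕ) < fr then ((b ⟨_, h⟩ : S) : E) else 0) = _
      rw [dif_pos (by simpa using i.isLt)]
      congr 1
    rw [hfdef]
    simp only [hx]
    ring

lemma frob_nonneg {m n : Type*} [Fintype m] [Fintype n] (M : Matrix m n ℂ) : 0 ≤ frob M :=
  Real.sqrt_nonneg _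

lemma frob_eq_norm {m n : Type*} [Fintype m] [Fintype n] (M : Matrix m n ℂ) :
    frob M = ‖((WithLp.equiv 2 (m × n → ℂ)).symm (fun p => M p.1 p.2) : EuclideanSpace ℂ (m × n))‖ := by
  rw [EuclideanSpace.norm_eq, frob, Fintype.sum_prod_type]
  rfl

lemma frob_add_le {m n : Type*} [Fintype m] [Fintype n] (M N : Matrix m n ℂ) :
    frob (M + N) ≤ frob M + frob N := by
  simp only [frob_eq_norm]
  have : ((WithLp.equiv 2 (m × n → ℂ)).symm (fun p => (M + N) p.1 p.2) : EuclideanSpace ℂ (m × n))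
      = (WithLp.equiv 2 (m × n → ℂ)).symm (fun p => M p.1 p.2)
        + (WithLp.equiv 2 (m × n → ℂ)).symm (fun p => N p.1 p.2) := rfl
  rw [this]
  exact norm_add_le _ _

lemma frob_neg {m n : Type*} [Fintype m] [Fintype n] (M : Matrix m n ℂ) :
    frob (-M) = frob M := by
  simp [frob]

lemma frob_continuous {m n : Type*} [Fintype m] [Fintype n] (A : Matrix m n ℂ) :
    Continuous fun C : Matrix m n ℂ => frob (C - A) := by
  apply Real.continuous_sqrt.comp
  apply continuous_finset_sum
  intro i _
  apply continuous_finset_sum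
  intro j _
  have hre : (fun C : Matrix m n ℂ => (C - A) i j) = fun C => C i j - A i j := rfl
  refine Continuous.pow (Continuous.norm ?_) 2
  rw [hre]
  exact ((continuous_id.matrix_elem i j).sub continuous_const)

lemma exists_best {D Nj : ℕ} (d : ℕ) (A : Matrix (Fin D) (Fin Nj) ℂ) :
    ∃ B, IsBestRankApprox d A B := by
  classical
  set e := min d D with he
  set R := 2 * frob A + 1 with hRdef
  have hR0 : 0 ≤ R := by have := frob_nonneg A; linarith
  set S1 : Set (Matrix (Fin D) (Fin e) ℂ) := {X | ∀ r k, ‖X r k‖ ≤ 1} with hS1def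
  set S2 : Set (Matrix (Fin e) (Fin Nj) ℂ) := {Y | ∀ k j, ‖Y k j‖ ≤ R} with hS2def
  have hS1 : IsCompact S1 := by
    have : S1 = Set.univ.pi (fun _ : Fin D => Set.univ.pi
        (fun _ : Fin e => Metric.closedBall (0 : ℂ) 1)) := by
      ext X
      constructor
      · exact fun hX r _ k _ => mem_closedBall_zero_iff.mpr (hX r k)
      · exact fun hX r k => mem_closedBall_zero_iff.mp (hX r (Set.mem_univ r) k (Set.mem_univ k))
    rw [this]
    exact isCompact_univ_pi fun _ => isCompact_univ_pi fun _ => isCompact_closedBall 0 1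
  have hS2 : IsCompact S2 := by
    have : S2 = Set.univ.pi (fun _ : Fin e => Set.univ.pi
        (fun _ : Fin Nj => Metric.closedBall (0 : ℂ) R)) := by
      ext Y
      constructor
      · exact fun hY k _ j _ => mem_closedBall_zero_iff.mpr (hY k j)
      · exact fun hY k j => mem_closedBall_zero_iff.mp (hY k (Set.mem_univ k) j (Set.mem_univ j))
    rw [this]
    exact isCompact_univ_pi fun _ => isCompact_univ_pi fun _ => isCompact_closedBall 0 R
  set K : Set (Matrix (Fin D) (Fin Nj) ℂ) := (fun p :
      Matrix (Fin D) (Fin e) ℂ × Matrix (Fin e) (Fin Nj) ℂ => p.1 * p.2) '' (S1 ×ˢ S2) with hKdef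
  have hK : IsCompact K :=
    (hS1.prod hS2).image (continuous_fst.matrix_mul continuous_snd)
  have h0K : (0 : Matrix (Fin D) (Fin Nj) ℂ) ∈ K := by
    refine ⟨(0, 0), ⟨?_, ?_⟩, by simp⟩
    · intro r k; simp
    · intro k j; simpa using hR0
  obtain ⟨B, hBK, hBmin⟩ := hK.exists_isMinOn ⟨0, h0K⟩ (frob_continuous A).continuousOn
  have hBmin' : ∀ C ∈ K, frob (B - A) ≤ frob (C - A) := fun C hC => hBmin hC
  have hB0 : frob (B - A) ≤ frob A := by
    have := hBmin' 0 h0K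
    rwa [zero_sub, frob_neg] at this
  have hrankB : B.rank ≤ d := by
    obtain ⟨⟨X, Y⟩, _, rfl⟩ := hBK
    exact (Matrix.rank_mul_le_left X Y).trans
      ((X.rank_le_card_width.trans (by simp [he])).trans (min_le_left d D))
  refine ⟨B, hrankB, ?_⟩
  intro C hC
  by_contra hlt
  push_neg at hlt
  have hfrobC : frob C ≤ R := by
    have h1 : frob C ≤ frob (C - A) + frob A := by
      have : C = (C - A) + A := by abel
      calc frob C = frob ((C - A) + A) := by rw [← this]
        _ ≤ frob (C - A) + frob A := frob_add_le _ _
    have := frob_nonneg A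
    rw [hRdef]; linarith
  have hrankC : C.rank ≤ e :=
    le_min hC (C.rank_le_card_height.trans (by simp))
  obtain ⟨X, Y, hX, hY, rfl⟩ := exists_factorization e C hrankC R hfrobC
  exact absurd (hBmin' _ ⟨(X, Y), ⟨hX, hY⟩, rfl⟩) (not_le.mpr hlt)

lemma frob_sq {m n : Type*} [Fintype m] [Fintype n] (M : Matrix m n ℂ) :
    frob M ^ 2 = ∑ i, ∑ j, ‖M i j‖ ^ 2 := by
  rw [frob, Real.sq_sqrt]; positivity

lemma frob_sq_sigma {D n : ℕ} {N : Fin n → ℕ} (M : Matrix (Fin D) ((j : Fin n) × Fin (N j)) ℂ) :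
    frob M ^ 2 = ∑ j, frob (Matrix.of fun r cc => M r ⟨j, cc⟩) ^ 2 := by
  rw [frob_sq, Finset.sum_comm, ← Finset.univ_sigma_univ, Finset.sum_sigma]
  refine Finset.sum_congr rfl fun j _ => ?_
  rw [frob_sq, Finset.sum_comm]
  rfl

-- block of a matrix as a product with a selection matrix
lemma block_rank_le {D n : ℕ} {N : Fin n → ℕ} (M : Matrix (Fin D) ((j : Fin n) × Fin (N j)) ℂ)
    (j : Fin n) : (Matrix.of fun r cc => M r ⟨j, cc⟩ : Matrix (Fin D) (Fin (N j)) ℂ).rank ≤ M.rank := by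
  classical
  have : (Matrix.of fun r cc => M r ⟨j, cc⟩ : Matrix (Fin D) (Fin (N j)) ℂ)
      = M * (Matrix.of fun (p : (j' : Fin n) × Fin (N j')) (c : Fin (N j)) =>
          if p = ⟨j, c⟩ then (1 : ℂ) else 0) := by
    ext r c
    rw [Matrix.mul_apply]
    simp only [Matrix.of_apply]
    rw [Finset.sum_eq_single (⟨j, c⟩ : (j' : Fin n) × Fin (N j'))]
    · simp
    · intro p _ hp; simp [hp]
    · intro hmem; exact absurd (Finset.mem_univ _) hmem
  rw [this]
  exact Matrix.rank_mul_le_left _ _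


end Aux

/-- If each `‖Ψ^j‖_F ≤ c ‖(A^j)_d − A^j‖_F` blockwise, then for the concatenations,
`‖Ψ̃‖_F ≤ c ‖(A)_d − A‖_F`. -/
theorem stmt14 {D n : ℕ} {N : Fin n → ℕ} (d : ℕ) (c : ℝ) (hc : 0 ≤ c)
    (A Ψ : Matrix (Fin D) ((j : Fin n) × Fin (N j)) ℂ)
    (h : ∀ j, ∀ Adj : Matrix (Fin D) (Fin (N j)) ℂ,
          IsBestRankApprox d (Matrix.of fun r cc => A r ⟨j, cc⟩) Adj →
          frob (Matrix.of fun r cc => Ψ r ⟨j, cc⟩) ≤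
            c * frob (Adj - Matrix.of fun r cc => A r ⟨j, cc⟩))
    (Ad : Matrix (Fin D) ((j : Fin n) × Fin (N j)) ℂ)
    (hAd : IsBestRankApprox d A Ad) :
    frob Ψ ≤ c * frob (Ad - A) := by
  classical
  -- choose best approximations of each block
  have hex : ∀ j : Fin n, ∃ B, IsBestRankApprox d (Matrix.of fun r cc => A r ⟨j, cc⟩) B :=
    fun j => exists_best d _
  choose B hB using hex
  -- blocks of Ad
  have hblock : ∀ j : Fin n,
      frob (B j - Matrix.of fun r cc => A r ⟨j, cc⟩) ≤
        frob ((Matrix.of fun r cc => Ad r ⟨j, cc⟩) - Matrix.of fun r cc => A r ⟨j, cc⟩) :=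
    fun j => (hB j).2 _ ((block_rank_le Ad j).trans hAd.1)
  have hAdblock : ∀ j : Fin n,
      ((Matrix.of fun r cc => Ad r ⟨j, cc⟩) - Matrix.of fun r cc => A r ⟨j, cc⟩)
        = (Matrix.of fun r cc => (Ad - A) r ⟨j, cc⟩ : Matrix (Fin D) (Fin (N j)) ℂ) := fun j => rfl
  have key : frob Ψ ^ 2 ≤ (c * frob (Ad - A)) ^ 2 := by
    rw [frob_sq_sigma Ψ]
    have h2 : (c * frob (Ad - A)) ^ 2 = ∑ j, (c ^ 2) * frob (Matrix.of fun r cc => (Ad - A) r ⟨j, cc⟩) ^ 2 := by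
      rw [← Finset.mul_sum, ← frob_sq_sigma, mul_pow]
    rw [h2]
    refine Finset.sum_le_sum fun j _ => ?_
    have h3 : frob (Matrix.of fun r cc => Ψ r ⟨j, cc⟩) ≤
        c * frob (B j - Matrix.of fun r cc => A r ⟨j, cc⟩) := h j (B j) (hB j)
    have h4 := hblock j
    rw [hAdblock j] at h4
    calc frob (Matrix.of fun r cc => Ψ r ⟨j, cc⟩) ^ 2
        ≤ (c * frob (Matrix.of fun r cc => (Ad - A) r ⟨j, cc⟩)) ^ 2 := by
          apply pow_le_pow_left₀ (frob_nonneg _)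
          exact h3.trans (by nlinarith [frob_nonneg (B j - Matrix.of fun r cc => A r ⟨j, cc⟩)])
      _ = c ^ 2 * frob (Matrix.of fun r cc => (Ad - A) r ⟨j, cc⟩) ^ 2 := by ring
  have hnn : 0 ≤ c * frob (Ad - A) := mul_nonneg hc (frob_nonneg _)
  nlinarith [frob_nonneg Ψ]
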